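/- For the Bernoulli(p) random walk started at 0 and any n ≥ 1, P(S_1 ≤ 0, S_2 ≤ 0, ..., S_n ≤ 0) = 1 − 2p·∑_{i even, 0 ≤ i ≤ n−1} a_i (pq)^{i/2}, where a_i = (1/(i+2))·C(i, i/2). -/

import Mathlib

open MeasureTheory ProbabilityTheory Finset

noncomputable def aCoef (i : ℕ) : ℝ := (1 / ((i : ℝ) + 2)) * (i.choose (i / 2) : ℝ)

namespace RWAux

open List

def wsum (l : List Bool) : ℤ := (l.map (fun b => if b then (1:ℤ) else -1)).sum

def adm (l : List Bool) : Prop := ∀ m : ℕ, wsum (l.take m) ≤ 0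

noncomputable def wt (p : ℝ) (l : List Bool) : ℝ :=
  (l.map (fun b => if b then p else 1 - p)).prod

@[simp] lemma wsum_nil : wsum ([] : List Bool) = 0 := rfl
@[simp] lemma wt_nil (p : ℝ) : wt p ([] : List Bool) = 1 := rfl

lemma wsum_append (l l' : List Bool) : wsum (l ++ l') = wsum l + wsum l' := by
  simp [wsum]

lemma wt_append (p : ℝ) (l l' : List Bool) : wt p (l ++ l') = wt p l * wt p l' := by
  simp [wt]

lemma wsum_eq (l : List Bool) : wsum l = (l.count true : ℤ) - (l.count false : ℤ) := by
  induction l with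
  | nil => simp
  | cons b t ih =>
    cases b <;> simp [wsum, List.count_cons] at * <;> push_cast <;> omega

lemma length_eq_counts (l : List Bool) : l.length = l.count true + l.count false := by
  induction l with
  | nil => simp
  | cons b t ih => cases b <;> simp only [List.count_cons, List.length_cons, ih] <;> simp <;> omega

lemma wt_eq (p : ℝ) (l : List Bool) :
    wt p l = p ^ l.count true * (1 - p) ^ l.count false := by
  induction l with
  | nil => simp
  | cons b t ih =>
    cases b <;> simp [wt, List.count_cons] at * <;> rw [ih] <;> ring

lemma adm_nil : adm ([] : List Bool) := by intro m; simp [adm]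

lemma wsum_le_of_adm {l : List Bool} (h : adm l) : wsum l ≤ 0 := by
  have := h l.length
  rwa [List.take_length] at this

lemma adm_append_singleton {l : List Bool} {b : Bool} :
    adm (l ++ [b]) ↔ adm l ∧ wsum l + (if b then 1 else -1) ≤ 0 := by
  constructor
  · intro h
    constructor
    · intro m
      rcases le_or_gt m l.length with hm | hm
      · have := h m
        rwa [List.take_append, Nat.sub_eq_zero_of_le hm,
          List.take_zero, List.append_nil] at this
      · rw [List.take_of_length_le (le_of_lt hm)]
        have := h l.length
        rwa [List.take_append, Nat.sub_self, List.take_zero,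
          List.append_nil, List.take_length] at this
    · have := h (l.length + 1)
      rw [List.take_of_length_le (by simp), wsum_append] at this
      simpa [wsum] using this
  · rintro ⟨h1, h2⟩ m
    rcases le_or_gt m l.length with hm | hm
    · rw [List.take_append, Nat.sub_eq_zero_of_le hm,
        List.take_zero, List.append_nil]
      exact h1 m
    · rw [List.take_of_length_le (by simp; omega), wsum_append]
      simpa [wsum] using h2


def g : Bool → DyckStep := fun b => bif b then .D else .U
def g' : DyckStep → Bool := fun s => match s with | .D => true | .U => false

lemma g_inj : Function.Injective g := by intro a b h; cases a <;> cases b <;> simp_all [g]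
lemma g'_inj : Function.Injective g' := by intro a b h; cases a <;> cases b <;> simp_all [g']

lemma count_D_map (l : List Bool) : (l.map g).count DyckStep.D = l.count true :=
  List.count_map_of_injective l g g_inj true

lemma count_U_map (l : List Bool) : (l.map g).count DyckStep.U = l.count false :=
  List.count_map_of_injective l g g_inj false

lemma count_true_map (L : List DyckStep) : (L.map g').count true = L.count DyckStep.D :=
  List.count_map_of_injective L g' g'_inj DyckStep.D

lemma count_false_map (L : List DyckStep) : (L.map g').count false = L.count DyckStep.U :=
  List.count_map_of_injective L g' g'_inj DyckStep.U

def dyckEquiv (k : ℕ) :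
    {l : List Bool // l.length = 2*k ∧ adm l ∧ wsum l = 0} ≃ {p : DyckWord // p.semilength = k} where
  toFun l := ⟨⟨l.1.map g, by
      rw [count_U_map, count_D_map]
      have h := wsum_eq l.1
      rw [l.2.2.2] at h; omega, by
      intro i
      rw [← List.map_take, count_U_map, count_D_map]
      have h1 := l.2.2.1 i
      rw [wsum_eq] at h1; omega⟩, by
      have hl := l.2.1
      have h := wsum_eq l.1
      rw [l.2.2.2] at h
      have h2 := length_eq_counts l.1
      show (l.1.map g).count DyckStep.U = k
      rw [count_U_map]; omega⟩
  invFun w := ⟨w.1.toList.map g', by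
      refine ⟨?_, ?_, ?_⟩
      · rw [List.length_map, ← w.1.two_mul_semilength_eq_length, w.2]
      · intro m
        rw [← List.map_take, wsum_eq, count_true_map, count_false_map]
        have := w.1.count_D_le_count_U m
        omega
      · rw [wsum_eq, count_true_map, count_false_map, w.1.count_U_eq_count_D]
        ring⟩
  left_inv l := by
    apply Subtype.ext
    simp only [List.map_map]
    have : g' ∘ g = id := by funext b; cases b <;> rfl
    rw [this, List.map_id]
  right_inv w := by
    apply Subtype.ext
    apply DyckWord.ext
    simp only [List.map_map]
    have : g ∘ g' = id := by funext s; cases s <;> rfl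
    rw [this, List.map_id]

def tupleListEquiv (n : ℕ) (P : List Bool → Prop) :
    {ε : Fin n → Bool // P (List.ofFn ε)} ≃ {l : List Bool // l.length = n ∧ P l} where
  toFun ε := ⟨List.ofFn ε.1, by simp, ε.2⟩
  invFun l := ⟨fun i => l.1.get (Fin.cast l.2.1.symm i), by
    have : (List.ofFn fun i : Fin n => l.1.get (Fin.cast l.2.1.symm i)) = l.1 := by
      obtain ⟨l, hl, hp⟩ := l
      subst hl
      simp [List.ofFn_get]
    rw [this]; exact l.2.2⟩
  left_inv ε := by
    apply Subtype.ext
    funext i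
    simp [List.get_ofFn]
  right_inv l := by
    apply Subtype.ext
    obtain ⟨l, hl, hp⟩ := l
    subst hl
    simp [List.ofFn_get]

open scoped Classical in
lemma card_filter (k : ℕ) :
    (Finset.univ.filter (fun ε : Fin (2*k) → Bool =>
      adm (List.ofFn ε) ∧ wsum (List.ofFn ε) = 0)).card = catalan k := by
  classical
  rw [← Fintype.card_subtype]
  rw [Fintype.card_congr (((tupleListEquiv (2*k)
    (fun l => adm l ∧ wsum l = 0)).trans ?_ : _ ≃ {p : DyckWord // p.semilength = k}))]
  · exact DyckWord.card_dyckWord_semilength_eq_catalan k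
  · exact (Equiv.subtypeEquivRight (fun l => by tauto)).trans (dyckEquiv k)

lemma wsum_take_ofFn {n : ℕ} (ε : Fin n → Bool) (m : ℕ) (hm : m ≤ n) :
    wsum ((List.ofFn ε).take m)
      = ∑ i ∈ Finset.range m,
          (if h : i < n then (if ε ⟨i,h⟩ then (1:ℤ) else -1) else 0) := by
  induction m with
  | zero => simp [wsum]
  | succ m ih =>
    have hm' : m ≤ n := by omega
    have hmn : m < n := by omega
    rw [Finset.sum_range_succ, ← ih hm']
    have hlen : m < (List.ofFn ε).length := by simp [hmn]
    have htake : (List.ofFn ε).take (m+1)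
        = (List.ofFn ε).take m ++ [(List.ofFn ε).get ⟨m, hlen⟩] := by
      rw [← List.concat_eq_append]
      exact (List.take_concat_get _).symm
    rw [htake, wsum_append]
    congr 1
    have hget : (List.ofFn ε).get ⟨m, hlen⟩ = ε ⟨m, hmn⟩ := by
      simp [List.get_ofFn]
    rw [hget, dif_pos hmn]
    simp [wsum]

lemma adm_ofFn_iff {n : ℕ} (ε : Fin n → Bool) :
    adm (List.ofFn ε) ↔ ∀ m, m ≤ n →
      (∑ i ∈ Finset.range m,
        (if h : i < n then (if ε ⟨i,h⟩ then (1:ℤ) else -1) else 0)) ≤ 0 := by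
  constructor
  · intro h m hm
    rw [← wsum_take_ofFn ε m hm]
    exact h m
  · intro h m
    rcases le_or_gt m n with hm | hm
    · rw [wsum_take_ofFn ε m hm]
      exact h m hm
    · rw [List.take_of_length_le (by simp; omega),
        ← List.take_of_length_le (le_of_eq (List.length_ofFn (f := ε))),
        wsum_take_ofFn ε n le_rfl]
      exact h n le_rfl

def snocEquiv (n : ℕ) : (Fin n → Bool) × Bool ≃ (Fin (n+1) → Bool) where
  toFun x := Fin.snoc x.1 x.2
  invFun f := (fun i => f i.castSucc, f (Fin.last n))
  left_inv x := by
    ext i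
    · simp
    · simp
  right_inv f := by
    funext i
    exact Fin.lastCases (by simp) (fun j => by simp) i

lemma ofFn_snoc {n : ℕ} (ε : Fin n → Bool) (b : Bool) :
    List.ofFn (Fin.snoc ε b) = List.ofFn ε ++ [b] := by
  rw [List.ofFn_succ']
  simp [List.concat_eq_append]

open scoped Classical in
noncomputable def G (p : ℝ) (n : ℕ) : ℝ :=
  ∑ ε : Fin n → Bool, if adm (List.ofFn ε) then wt p (List.ofFn ε) else 0

open scoped Classical in
noncomputable def Z (p : ℝ) (n : ℕ) : ℝ :=
  ∑ ε : Fin n → Bool, if adm (List.ofFn ε) ∧ wsum (List.ofFn ε) = 0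
    then wt p (List.ofFn ε) else 0

lemma G_zero (p : ℝ) : G p 0 = 1 := by
  classical
  rw [G]
  rw [Fintype.sum_eq_single (fun _ => true) (by intro x hx; exact absurd (funext fun i => i.elim0) hx)]
  simp [adm_nil, wt]

lemma adm_append_true {l : List Bool} :
    adm (l ++ [true]) ↔ adm l ∧ wsum l + 1 ≤ 0 := by
  rw [adm_append_singleton]; simp

lemma adm_append_false {l : List Bool} :
    adm (l ++ [false]) ↔ adm l ∧ wsum l - 1 ≤ 0 := by
  rw [adm_append_singleton]; simp [sub_eq_add_neg]

lemma G_succ (p : ℝ) (n : ℕ) : G p (n+1) = G p n - p * Z p n := by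
  classical
  rw [G, ← Equiv.sum_comp (snocEquiv n), Fintype.sum_prod_type]
  rw [G, Z, Finset.mul_sum, ← Finset.sum_sub_distrib]
  apply Finset.sum_congr rfl
  intro ε _
  have hsnoc : ∀ b, (snocEquiv n) (ε, b) = Fin.snoc ε b := fun _ => rfl
  simp only [hsnoc, ofFn_snoc]
  rw [Fintype.sum_bool]
  set l := List.ofFn ε with hl
  have wtT : wt p (l ++ [true]) = wt p l * p := by rw [wt_append]; simp [wt]
  have wtF : wt p (l ++ [false]) = wt p l * (1 - p) := by rw [wt_append]; simp [wt]
  by_cases ha : adm l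
  · by_cases hz : wsum l = 0
    · have hTn : ¬ adm (l ++ [true]) := by
        rw [adm_append_true]; rintro ⟨-, h⟩; omega
      have hFp : adm (l ++ [false]) := adm_append_false.mpr ⟨ha, by omega⟩
      rw [if_neg hTn, if_pos hFp, if_pos ha,
        if_pos (show adm l ∧ wsum l = 0 from ⟨ha, hz⟩), wtF]
      ring
    · have hlt : wsum l ≤ -1 := by have := wsum_le_of_adm ha; omega
      have hTp : adm (l ++ [true]) := adm_append_true.mpr ⟨ha, by omega⟩
      have hFp : adm (l ++ [false]) := adm_append_false.mpr ⟨ha, by omega⟩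
      rw [if_pos hTp, if_pos hFp, if_pos ha,
        if_neg (show ¬(adm l ∧ wsum l = 0) from fun h => hz h.2), wtT, wtF]
      ring
  · have hTn : ¬ adm (l ++ [true]) := fun h => ha (adm_append_true.mp h).1
    have hFn : ¬ adm (l ++ [false]) := fun h => ha (adm_append_false.mp h).1
    rw [if_neg hTn, if_neg hFn, if_neg ha,
      if_neg (show ¬(adm l ∧ wsum l = 0) from fun h => ha h.1)]
    ring

lemma Z_eq (p : ℝ) (n : ℕ) :
    Z p n = if Even n then (catalan (n/2) : ℝ) * (p*(1-p))^(n/2) else 0 := by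
  classical
  rw [Z, ← Finset.sum_filter]
  by_cases hn : Even n
  · rw [if_pos hn]
    obtain ⟨k, hk⟩ := hn
    have hn2 : n = 2*k := by omega
    subst hn2
    have hdiv : 2*k/2 = k := by omega
    rw [hdiv]
    have hconst : ∀ ε ∈ Finset.univ.filter (fun ε : Fin (2*k) → Bool =>
        adm (List.ofFn ε) ∧ wsum (List.ofFn ε) = 0),
        wt p (List.ofFn ε) = (p*(1-p))^k := by
      intro ε hε
      rw [Finset.mem_filter] at hε
      obtain ⟨-, h1, h2⟩ := hε
      have e1 := wsum_eq (List.ofFn ε)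
      have e2 := length_eq_counts (List.ofFn ε)
      rw [List.length_ofFn] at e2
      rw [h2] at e1
      have hc : (List.ofFn ε).count true = k := by omega
      have hc' : (List.ofFn ε).count false = k := by omega
      rw [wt_eq, hc, hc', ← mul_pow]
    rw [Finset.sum_congr rfl hconst, Finset.sum_const, card_filter k, nsmul_eq_mul]
  · rw [if_neg hn]
    rw [Finset.filter_eq_empty_iff.mpr, Finset.sum_empty]
    rintro ε - ⟨h1, h2⟩
    apply hn
    have e1 := wsum_eq (List.ofFn ε)
    have e2 := length_eq_counts (List.ofFn ε)
    rw [List.length_ofFn] at e2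
    rw [h2] at e1
    exact ⟨(List.ofFn ε).count true, by omega⟩

lemma catalan_aCoef {n : ℕ} (hn : Even n) : (catalan (n/2) : ℝ) = 2 * aCoef n := by
  obtain ⟨k, hk⟩ := hn
  have hn2 : n = 2*k := by omega
  subst hn2
  have h := succ_mul_catalan_eq_centralBinom k
  rw [Nat.centralBinom_eq_two_mul_choose] at h
  have h' : ((k:ℝ)+1) * (catalan k : ℝ) = ((2*k).choose k : ℝ) := by exact_mod_cast h
  have hdiv : 2*k/2 = k := by omega
  rw [aCoef, hdiv]
  have hne : ((2*k : ℕ):ℝ) + 2 ≠ 0 := by positivity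
  rw [← h']
  push_cast
  field_simp

lemma G_eq (p : ℝ) (n : ℕ) :
    G p n = 1 - 2*p*∑ i ∈ (Finset.range n).filter (fun i => Even i),
      aCoef i * (p*(1-p))^(i/2) := by
  induction n with
  | zero => simp [G_zero]
  | succ n ih =>
    rw [G_succ, ih, Z_eq]
    rw [Finset.range_add_one, Finset.filter_insert]
    by_cases hn : Even n
    · rw [if_pos hn, if_pos hn, Finset.sum_insert (by simp)]
      rw [catalan_aCoef hn]
      ring
    · rw [if_neg hn, if_neg hn, mul_zero, sub_zero]


end RWAux

open RWAux

theorem prob_nonpos {Ω : Type*} [MeasurableSpace Ω] (μ : Measure Ω)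
    [IsProbabilityMeasure μ]
    (p : ℝ) (hp0 : 0 < p) (hp1 : p < 1)
    (X : ℕ → Ω → ℤ) (hmeas : ∀ i, Measurable (X i))
    (hindep : iIndepFun X μ)
    (hX1 : ∀ i, μ {ω | X i ω = 1} = ENNReal.ofReal p)
    (hX2 : ∀ i, μ {ω | X i ω = -1} = ENNReal.ofReal (1 - p))
    (S : ℕ → Ω → ℤ) (hS : ∀ n ω, S n ω = ∑ i ∈ Finset.range n, X i ω)
    (n : ℕ) (hn : 1 ≤ n)
    :
    (μ {ω | ∀ m, 1 ≤ m → m ≤ n → S m ω ≤ 0}).toReal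
      = 1 - 2 * p * ∑ i ∈ (Finset.range n).filter (fun i => Even i),
          aCoef i * (p * (1 - p)) ^ (i / 2) := by
  classical
  -- boolean step values
  set vf : (Fin n → Bool) → ℕ → ℤ :=
    fun ε i => if h : i < n then (if ε ⟨i,h⟩ then 1 else -1) else 0 with hvf
  set B : (Fin n → Bool) → Set Ω :=
    fun ε => ⋂ i ∈ Finset.range n, {ω | X i ω = vf ε i} with hB
  set A : Set Ω := {ω | ∀ m, 1 ≤ m → m ≤ n → S m ω ≤ 0} with hA
  set Gd : Set Ω := {ω | ∀ i, i < n → (X i ω = 1 ∨ X i ω = -1)} with hGd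
  set F : Finset (Fin n → Bool) :=
    Finset.univ.filter (fun ε => adm (List.ofFn ε)) with hF
  -- measure of each cylinder
  have hsetmeas : ∀ (i : ℕ) (z : ℤ), MeasurableSet {ω | X i ω = z} := by
    intro i z
    exact (hmeas i) (measurableSet_singleton z)
  have hBval : ∀ ε, μ (B ε)
      = ∏ i ∈ Finset.range n, μ {ω | X i ω = vf ε i} := by
    intro ε
    exact hindep.meas_biInter (S := Finset.range n)
      (s := fun i => {ω | X i ω = vf ε i})
      (fun i _ => ⟨{vf ε i}, measurableSet_singleton _, rfl⟩)
  -- the complement of Gd is null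
  have hGdnull : μ Gdᶜ = 0 := by
    have hsub : Gdᶜ ⊆ ⋃ i ∈ Finset.range n, ({ω | X i ω = 1} ∪ {ω | X i ω = -1})ᶜ := by
      intro ω hω
      simp only [hGd, Set.mem_compl_iff, Set.mem_setOf_eq, not_forall] at hω
      obtain ⟨i, hi, hne⟩ := hω
      refine Set.mem_biUnion (Finset.mem_range.mpr hi) ?_
      simp only [Set.mem_compl_iff, Set.mem_union, Set.mem_setOf_eq]
      tauto
    refine measure_mono_null hsub (measure_biUnion_null_iff (Finset.range n).countable_toSet |>.mpr ?_)
    intro i _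
    have hdisj : Disjoint {ω | X i ω = 1} {ω | X i ω = -1} := by
      rw [Set.disjoint_left]
      intro ω h1 h2
      simp only [Set.mem_setOf_eq] at h1 h2
      omega
    have huni : μ ({ω | X i ω = 1} ∪ {ω | X i ω = -1}) = 1 := by
      rw [measure_union hdisj (hsetmeas i (-1)), hX1 i, hX2 i,
        ← ENNReal.ofReal_add (le_of_lt hp0) (by linarith)]
      norm_num
    rw [measure_compl ((hsetmeas i 1).union (hsetmeas i (-1))) (by simp), huni]
    simp
  -- on B ε, the walk values agree with the combinatorial sums
  have hSwalk : ∀ ε ω, ω ∈ B ε → ∀ m, m ≤ n →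
      S m ω = ∑ i ∈ Finset.range m, vf ε i := by
    intro ε ω hω m hm
    rw [hS]
    refine Finset.sum_congr rfl ?_
    intro i hi
    rw [Finset.mem_range] at hi
    have : ω ∈ {ω | X i ω = vf ε i} :=
      Set.mem_iInter₂.mp hω i (Finset.mem_range.mpr (by omega)) 
    exact this
  -- A and the union agree modulo Gd
  have hkey : A ∩ Gd = (⋃ ε ∈ F, B ε) ∩ Gd := by
    ext ω
    simp only [Set.mem_inter_iff, and_congr_left_iff]
    intro hg
    rw [hGd, Set.mem_setOf_eq] at hg
    constructor
    · intro ha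
      rw [hA, Set.mem_setOf_eq] at ha
      set ε : Fin n → Bool := fun i => decide (X (i : ℕ) ω = 1) with hε
      have hωB : ω ∈ B ε := by
        rw [hB]
        refine Set.mem_iInter₂.mpr ?_
        intro i hi
        rw [Finset.mem_range] at hi
        rcases hg i hi with h1 | h2
        · simp only [hvf, Set.mem_setOf_eq, dif_pos hi, hε]
          simp [h1]
        · simp only [hvf, Set.mem_setOf_eq, dif_pos hi, hε]
          simp only [h2]
          norm_num
      refine Set.mem_iUnion₂.mpr ⟨ε, ?_, hωB⟩
      rw [hF, Finset.mem_filter]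
      refine ⟨Finset.mem_univ _, ?_⟩
      rw [adm_ofFn_iff]
      intro m hm
      rcases Nat.eq_zero_or_pos m with h0 | h1
      · subst h0; simp
      · have := ha m h1 hm
        rw [hSwalk ε ω hωB m hm] at this
        exact this
    · intro hu
      obtain ⟨ε, hεF, hωB⟩ := Set.mem_iUnion₂.mp hu
      rw [hF, Finset.mem_filter, adm_ofFn_iff] at hεF
      rw [hA, Set.mem_setOf_eq]
      intro m h1 hm
      rw [hSwalk ε ω hωB m hm]
      exact hεF.2 m hm
  -- put it together
  have hμA : μ A = ∑ ε ∈ F, μ (B ε) := by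
    rw [← measure_inter_conull hGdnull, hkey, measure_inter_conull hGdnull]
    refine measure_biUnion_finset ?_ ?_
    · intro ε hε ε' hε' hne
      refine Set.disjoint_left.mpr ?_
      intro ω hω hω'
      have hne' : ∃ i : Fin n, ε i ≠ ε' i := by
        by_contra h
        push_neg at h
        exact hne (funext h)
      obtain ⟨i, hi⟩ := hne'
      have h1 : X (i:ℕ) ω = vf ε i := Set.mem_iInter₂.mp hω i (Finset.mem_range.mpr i.isLt)
      have h2 : X (i:ℕ) ω = vf ε' i := Set.mem_iInter₂.mp hω' i (Finset.mem_range.mpr i.isLt)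
      rw [h1] at h2
      simp only [hvf, dif_pos i.isLt, Fin.eta] at h2
      rcases Bool.dichotomy (ε i) with h | h <;> rcases Bool.dichotomy (ε' i) with h' | h' <;>
        simp [h, h'] at h2 hi
    · intro ε _
      exact MeasurableSet.biInter (Finset.range n).countable_toSet
        (fun i _ => hsetmeas i _)
  have hq0 : (0:ℝ) ≤ 1 - p := by linarith
  have hprod : ∀ ε : Fin n → Bool,
      μ (B ε) = ENNReal.ofReal (wt p (List.ofFn ε)) := by
    intro ε
    rw [hBval]
    have hfac : ∀ i ∈ Finset.range n,
        μ {ω | X i ω = vf ε i}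
          = ENNReal.ofReal (if h : i < n then (if ε ⟨i,h⟩ then p else 1-p) else 1) := by
      intro i hi
      rw [Finset.mem_range] at hi
      simp only [hvf, dif_pos hi]
      rcases Bool.dichotomy (ε ⟨i, hi⟩) with h | h <;> rw [h]
      · simpa using hX2 i
      · simpa using hX1 i
    rw [Finset.prod_congr rfl hfac,
      ← ENNReal.ofReal_prod_of_nonneg (fun i _ => by
        split <;> [skip; norm_num]
        split <;> [exact le_of_lt hp0; exact hq0])]
    congr 1
    have : wt p (List.ofFn ε) = ∏ i : Fin n, (if ε i then p else 1 - p) := by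
      rw [wt, List.map_ofFn, List.prod_ofFn]
      rfl
    rw [this, ← Fin.prod_univ_eq_prod_range
      (fun i => if h : i < n then (if ε ⟨i,h⟩ then p else 1-p) else 1)]
    refine Finset.prod_congr rfl ?_
    intro i _
    simp
  have hwt_nonneg : ∀ ε : Fin n → Bool, 0 ≤ wt p (List.ofFn ε) := by
    intro ε
    rw [wt]
    apply List.prod_nonneg
    intro x hx
    rw [List.mem_map] at hx
    obtain ⟨b, -, rfl⟩ := hx
    split <;> [exact le_of_lt hp0; exact hq0]
  rw [hμA]
  rw [Finset.sum_congr rfl (fun ε _ => hprod ε)]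
  rw [← ENNReal.ofReal_sum_of_nonneg (fun ε _ => hwt_nonneg ε),
    ENNReal.toReal_ofReal (Finset.sum_nonneg (fun ε _ => hwt_nonneg ε))]
  have : ∑ ε ∈ F, wt p (List.ofFn ε) = G p n := by
    rw [G, hF, Finset.sum_filter]
  rw [this, G_eq]
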